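/- arXiv:2107.10184 — 2 statements merged into one kernel-verified Lean document; each statement's English description precedes it below -/
import Mathlib

section
/- Let \kappa be a nonzero complex number. There exists a unique formal power series g(u,h) in C((u))[[h]] such that g(u,0) = (1 - e^{-u})^{-2} and g(u,h) g(u + \kappa h, h) = 1/((1 - e^{-u-h})(1 - e^{-u+h})(1 - e^{-u-\kappa h})(1 - e^{-u+\kappa h})), where all expressions of the form (1 - e^{-u+ah})^{-1} are expanded as elements of C((u))[[h]] and g(u+\kappa h, h) is defined by the formal Taylor expansion. -/
noncomputable section

/-- Formal derivative of a power series. -/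
def psDeriv (f : PowerSeries ℂ) : PowerSeries ℂ :=
  PowerSeries.mk fun n => ((n : ℂ) + 1) * PowerSeries.coeff (n + 1) f

/-- Formal derivative of a Laurent series. -/
def lsDeriv (f : LaurentSeries ℂ) : LaurentSeries ℂ :=
  HahnSeries.single (f.order - 1) ((f.order : ℤ) : ℂ) *
      HahnSeries.ofPowerSeries ℤ ℂ f.powerSeriesPart
    + HahnSeries.single f.order (1 : ℂ) *
      HahnSeries.ofPowerSeries ℤ ℂ (psDeriv f.powerSeriesPart)

/-- The formal Taylor shift `g(u,h) ↦ g(u + κh, h)` on `ℂ((u))[[h]]`. -/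
def taylorShift (κ : ℂ) (G : PowerSeries (LaurentSeries ℂ)) : PowerSeries (LaurentSeries ℂ) :=
  PowerSeries.mk fun k => ∑ m ∈ Finset.range (k + 1),
    (κ ^ m / (m.factorial : ℂ)) • lsDeriv^[m] (PowerSeries.coeff (k - m) G)

/-- `e^{-u} ∈ ℂ[[u]] ⊆ ℂ((u))`. -/
def expNegU : LaurentSeries ℂ :=
  HahnSeries.ofPowerSeries ℤ ℂ (PowerSeries.rescale (-1) (PowerSeries.exp ℂ))

/-- `(1 - e^{-u+ah})⁻¹ ∈ ℂ((u))[[h]]`, expanded by the Taylor formula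
`∑_{l ≥ 0} (ah)^l/l! · ∂_u^l (1 - e^{-u})⁻¹`. -/
def shiftInv (a : ℂ) : PowerSeries (LaurentSeries ℂ) :=
  PowerSeries.mk fun l =>
    (a ^ l / (l.factorial : ℂ)) • lsDeriv^[l] ((1 - expNegU)⁻¹)

/- ### Auxiliary development -/

/-- The leading coefficient `(1 - e^{-u})⁻²`. -/
def cc : LaurentSeries ℂ := ((1 - expNegU)⁻¹) ^ 2

lemma one_sub_expNegU_ne_zero : (1 : LaurentSeries ℂ) - expNegU ≠ 0 := by
  have h1 : ((1 : LaurentSeries ℂ) - expNegU).coeff 1 = 1 := by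
    rw [HahnSeries.coeff_sub]
    rw [show ((1 : ℤ)) = ((1 : ℕ) : ℤ) by norm_num]
    rw [expNegU, HahnSeries.ofPowerSeries_apply_coeff, PowerSeries.coeff_rescale,
      PowerSeries.coeff_exp]
    simp [HahnSeries.coeff_one]
  intro h
  rw [h] at h1
  simp at h1

lemma cc_ne_zero : cc ≠ 0 :=
  pow_ne_zero _ (inv_ne_zero one_sub_expNegU_ne_zero)

lemma lsTwo_ne_zero : (2 : LaurentSeries ℂ) ≠ 0 := by
  intro h
  have := congrArg (fun f : LaurentSeries ℂ => f.coeff 0) h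
  rw [show (2 : LaurentSeries ℂ) = 1 + 1 by norm_num] at this
  simp [HahnSeries.coeff_add, HahnSeries.coeff_one] at this

lemma two_cc_ne_zero : 2 * cc ≠ 0 := mul_ne_zero lsTwo_ne_zero cc_ne_zero

/-- coefficient-level Taylor shift -/
def Tc (κ : ℂ) (f : ℕ → LaurentSeries ℂ) (j : ℕ) : LaurentSeries ℂ :=
  ∑ m ∈ Finset.range (j + 1), (κ ^ m / (m.factorial : ℂ)) • lsDeriv^[m] (f (j - m))

lemma coeff_taylorShift (κ : ℂ) (G : PowerSeries (LaurentSeries ℂ)) (k : ℕ) :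
    PowerSeries.coeff k (taylorShift κ G)
      = Tc κ (fun n => PowerSeries.coeff n G) k := by
  simp [taylorShift, Tc]

lemma Tc_congr {κ : ℂ} {f f' : ℕ → LaurentSeries ℂ} {j : ℕ}
    (h : ∀ i ≤ j, f i = f' i) : Tc κ f j = Tc κ f' j :=
  Finset.sum_congr rfl fun m _ => by rw [h _ (Nat.sub_le _ _)]

lemma Tc_zero (κ : ℂ) (f : ℕ → LaurentSeries ℂ) : Tc κ f 0 = f 0 := by
  simp [Tc]

lemma Tc_succ (κ : ℂ) (f : ℕ → LaurentSeries ℂ) (k : ℕ) :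
    Tc κ f (k + 1) = f (k + 1)
      + ∑ m ∈ Finset.Icc 1 (k + 1), (κ ^ m / (m.factorial : ℂ)) • lsDeriv^[m] (f (k + 1 - m)) := by
  rw [Tc, show Finset.range (k + 2) = insert 0 (Finset.Icc 1 (k + 1)) by ext x; simp; omega,
    Finset.sum_insert (by simp)]
  simp

/-- coefficients of the right-hand side -/
def rr (κ : ℂ) (k : ℕ) : LaurentSeries ℂ :=
  PowerSeries.coeff k (shiftInv 1 * shiftInv (-1) * shiftInv κ * shiftInv (-κ))

lemma rr_zero (κ : ℂ) : rr κ 0 = cc ^ 2 := by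
  have h : ∀ a : ℂ, PowerSeries.constantCoeff (shiftInv a)
      = (1 - expNegU)⁻¹ := by
    intro a
    have : PowerSeries.constantCoeff (shiftInv a)
        = PowerSeries.coeff 0 (shiftInv a) := by
      rw [PowerSeries.coeff_zero_eq_constantCoeff]
    rw [this]
    simp [shiftInv]
  rw [rr, PowerSeries.coeff_zero_eq_constantCoeff, map_mul, map_mul, map_mul, h, h, h, h, cc]
  ring

/-- the recursion step producing coefficient `k` from the previous ones -/
def nxt (κ : ℂ) (k : ℕ) (p : ℕ → LaurentSeries ℂ) : LaurentSeries ℂ :=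
  (2 * cc)⁻¹ * (rr κ k - (∑ i ∈ Finset.Ioo 0 k, p i * Tc κ p (k - i))
    - cc * ∑ m ∈ Finset.Icc 1 k, (κ ^ m / (m.factorial : ℂ)) • lsDeriv^[m] (p (k - m)))

lemma nxt_congr {κ : ℂ} {k : ℕ} {p p' : ℕ → LaurentSeries ℂ}
    (h : ∀ i ≤ k, p i = p' i) : nxt κ (k + 1) p = nxt κ (k + 1) p' := by
  unfold nxt
  congr 2
  · congr 1
    refine Finset.sum_congr rfl fun i hi => ?_
    rw [Finset.mem_Ioo] at hi
    rw [h i (by omega), Tc_congr (fun a ha => h a (by omega))]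
  · congr 1
    refine Finset.sum_congr rfl fun m hm => ?_
    rw [Finset.mem_Icc] at hm
    rw [h _ (by omega)]

/-- the tower of partial coefficient functions -/
def gcVec (κ : ℂ) : ℕ → ℕ → LaurentSeries ℂ
  | 0 => fun j => if j = 0 then cc else 0
  | (k + 1) => Function.update (gcVec κ k) (k + 1) (nxt κ (k + 1) (gcVec κ k))

/-- the coefficients of the solution -/
def gc (κ : ℂ) (k : ℕ) : LaurentSeries ℂ := gcVec κ k k

lemma gcVec_eq (κ : ℂ) : ∀ k j, j ≤ k → gcVec κ k j = gc κ j := by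
  intro k
  induction k with
  | zero =>
    intro j hj
    have : j = 0 := by omega
    subst this; rfl
  | succ k ih =>
    intro j hj
    rcases Nat.lt_or_ge j (k + 1) with h | h
    · rw [gcVec, Function.update_of_ne (by omega), ih j (by omega)]
    · have : j = k + 1 := by omega
      subst this; rfl

lemma gc_zero (κ : ℂ) : gc κ 0 = cc := rfl

lemma gc_succ (κ : ℂ) (k : ℕ) : gc κ (k + 1) = nxt κ (k + 1) (gc κ) := by
  show gcVec κ (k + 1) (k + 1) = _
  rw [gcVec, Function.update_self]
  exact nxt_congr fun i hi => gcVec_eq κ k i hi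

/-- the key coefficient identity for the product `g · taylorShift κ g` -/
lemma key (κ : ℂ) (f : ℕ → LaurentSeries ℂ) (hf0 : f 0 = cc) (k : ℕ) :
    ∑ i ∈ Finset.range (k + 2), f i * Tc κ f (k + 1 - i)
      = 2 * cc * f (k + 1) + (∑ i ∈ Finset.Ioo 0 (k + 1), f i * Tc κ f (k + 1 - i))
        + cc * ∑ m ∈ Finset.Icc 1 (k + 1),
            (κ ^ m / (m.factorial : ℂ)) • lsDeriv^[m] (f (k + 1 - m)) := by
  have hsplit : Finset.range (k + 2) = insert 0 (insert (k + 1) (Finset.Ioo 0 (k + 1))) := by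
    ext x; simp; omega
  rw [hsplit, Finset.sum_insert (by simp), Finset.sum_insert (by simp)]
  rw [Nat.sub_zero, Nat.sub_self, Tc_zero, Tc_succ, hf0]
  ring

lemma coeff_mul_taylor (κ : ℂ) (g : PowerSeries (LaurentSeries ℂ)) (k : ℕ) :
    PowerSeries.coeff k (g * taylorShift κ g)
      = ∑ i ∈ Finset.range (k + 1),
          PowerSeries.coeff i g
            * Tc κ (fun n => PowerSeries.coeff n g) (k - i) := by
  rw [PowerSeries.coeff_mul, Finset.Nat.sum_antidiagonal_eq_sum_range_succ_mk]
  exact Finset.sum_congr rfl fun i _ => by rw [coeff_taylorShift]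

/-- for `κ ≠ 0` there is a unique `g(u,h) ∈ ℂ((u))[[h]]` with
`g(u,0) = (1 - e^{-u})⁻²` and
`g(u,h) g(u+κh,h) = 1/((1-e^{-u-h})(1-e^{-u+h})(1-e^{-u-κh})(1-e^{-u+κh}))`,
where the shift `g(u+κh,h)` is the formal Taylor expansion and each factor
`(1-e^{-u+ah})⁻¹` is expanded in `ℂ((u))[[h]]`.
Note `(1-e^{-u-h})⁻¹ = shiftInv 1` (shift `u ↦ u + h`), etc. -/
theorem stmt3 (κ : ℂ) (hκ : κ ≠ 0) :
    ∃! g : PowerSeries (LaurentSeries ℂ),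
      PowerSeries.coeff 0 g = ((1 - expNegU)⁻¹) ^ 2 ∧
      g * taylorShift κ g = shiftInv 1 * shiftInv (-1) * shiftInv κ * shiftInv (-κ) := by
  refine ⟨PowerSeries.mk (gc κ), ⟨?_, ?_⟩, ?_⟩
  · simp [gc_zero, cc]
  · -- existence: the equation holds
    refine PowerSeries.ext fun k => ?_
    rw [coeff_mul_taylor]
    have hfun : (fun n => PowerSeries.coeff n (PowerSeries.mk (gc κ))) = gc κ :=
      funext fun n => PowerSeries.coeff_mk n _
    simp only [PowerSeries.coeff_mk, hfun]
    show _ = rr κ k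
    match k with
    | 0 =>
      rw [rr_zero, Finset.range_one, Finset.sum_singleton, Nat.sub_self, Tc_zero]
      rw [gc_zero]
      ring
    | (k + 1) =>
      rw [key κ (gc κ) (gc_zero κ) k, gc_succ, nxt, ← mul_assoc, mul_inv_cancel₀ two_cc_ne_zero,
        one_mul]
      ring
  · -- uniqueness
    rintro g' ⟨hg0, hge⟩
    have hg0' : PowerSeries.coeff 0 g' = cc := hg0
    have hco : ∀ k, ∑ i ∈ Finset.range (k + 1),
        PowerSeries.coeff i g'
          * Tc κ (fun n => PowerSeries.coeff n g') (k - i) = rr κ k := by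
      intro k
      rw [← coeff_mul_taylor, hge]; rfl
    have main : ∀ k, PowerSeries.coeff k g' = gc κ k := by
      intro k
      induction k using Nat.strong_induction_on with
      | _ k ih =>
        match k with
        | 0 => exact hg0'.trans (gc_zero κ).symm
        | (k + 1) =>
          have h1 := hco (k + 1)
          rw [key κ _ hg0' k] at h1
          have hA : (∑ i ∈ Finset.Ioo 0 (k + 1),
              PowerSeries.coeff i g'
                * Tc κ (fun n => PowerSeries.coeff n g') (k + 1 - i))
              = ∑ i ∈ Finset.Ioo 0 (k + 1), gc κ i * Tc κ (gc κ) (k + 1 - i) := by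
            refine Finset.sum_congr rfl fun i hi => ?_
            rw [Finset.mem_Ioo] at hi
            rw [ih i (by omega), Tc_congr (fun a ha => ih a (by omega))]
          have hS : (∑ m ∈ Finset.Icc 1 (k + 1), (κ ^ m / (m.factorial : ℂ)) •
                lsDeriv^[m] (PowerSeries.coeff (k + 1 - m) g'))
              = ∑ m ∈ Finset.Icc 1 (k + 1), (κ ^ m / (m.factorial : ℂ)) •
                lsDeriv^[m] (gc κ (k + 1 - m)) := by
            refine Finset.sum_congr rfl fun m hm => ?_
            rw [Finset.mem_Icc] at hm
            rw [ih _ (by omega)]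
          rw [hA, hS] at h1
          have h2 : 2 * cc * gc κ (k + 1)
              + (∑ i ∈ Finset.Ioo 0 (k + 1), gc κ i * Tc κ (gc κ) (k + 1 - i))
              + cc * ∑ m ∈ Finset.Icc 1 (k + 1), (κ ^ m / (m.factorial : ℂ)) •
                  lsDeriv^[m] (gc κ (k + 1 - m)) = rr κ (k + 1) := by
            rw [gc_succ, nxt, ← mul_assoc, mul_inv_cancel₀ two_cc_ne_zero, one_mul]
            ring
          have h3 := h1.trans h2.symm
          exact mul_left_cancel₀ two_cc_ne_zero (by linear_combination h3)
    exact PowerSeries.ext fun n => (main n).trans (PowerSeries.coeff_mk n _).symm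

end
end

section
/- The unique solution g(u,h) of the functional equation g(u,h) g(u+\kappa h,h) = 1/((1-e^{-u-h})(1-e^{-u+h})(1-e^{-u-\kappa h})(1-e^{-u+\kappa h})) with g(u,0) = (1-e^{-u})^{-2} admits the form g(u,h) = \sum_{l\ge 0} p_l(e^{-u})/(1-e^{-u})^{r_l} h^l for some polynomials p_l(z) in C[z] and nonnegative integers r_l. -/
noncomputable section

lemma ofPS_coeff_neg (p : PowerSeries ℂ) {n : ℤ} (hn : n < 0) :
    (HahnSeries.ofPowerSeries ℤ ℂ p).coeff n = 0 := by
  rw [HahnSeries.ofPowerSeries_apply, HahnSeries.embDomain_of_notMem_range]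
  rintro ⟨m, hm⟩
  simp only [Nat.castOrderEmbedding_apply] at hm
  omega

lemma ofPS_coeff_nonneg (p : PowerSeries ℂ) {n : ℤ} (hn : 0 ≤ n) :
    (HahnSeries.ofPowerSeries ℤ ℂ p).coeff n = PowerSeries.coeff n.toNat p := by
  have h : n = ((n.toNat : ℕ) : ℤ) := by omega
  conv_lhs => rw [h]
  rw [HahnSeries.ofPowerSeries_apply_coeff]

lemma single_mul_coeff {r : ℂ} {x : LaurentSeries ℂ} {n b : ℤ} :
    (HahnSeries.single b r * x).coeff n = r * x.coeff (n - b) := by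
  have := HahnSeries.coeff_single_mul_add (r := r) (x := x) (a := n - b) (b := b)
  rwa [sub_add_cancel] at this

lemma lsDeriv_coeff (f : LaurentSeries ℂ) (n : ℤ) :
    (lsDeriv f).coeff n = ((n + 1 : ℤ) : ℂ) * f.coeff (n + 1) := by
  unfold lsDeriv
  rw [HahnSeries.coeff_add, single_mul_coeff, single_mul_coeff, one_mul]
  rcases lt_trichotomy (n + 1) f.order with h | h | h
  · rw [ofPS_coeff_neg _ (show n - (f.order - 1) < 0 by omega),
      ofPS_coeff_neg _ (show n - f.order < 0 by omega),
      HahnSeries.coeff_eq_zero_of_lt_order h]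
    ring
  · rw [ofPS_coeff_nonneg _ (show (0:ℤ) ≤ n - (f.order - 1) by omega),
      ofPS_coeff_neg _ (show n - f.order < 0 by omega),
      show (n - (f.order - 1)).toNat = 0 by omega,
      LaurentSeries.powerSeriesPart_coeff,
      show f.order + ((0:ℕ):ℤ) = n + 1 by omega, ← h]
    push_cast
    ring
  · rw [ofPS_coeff_nonneg _ (show (0:ℤ) ≤ n - (f.order - 1) by omega),
      ofPS_coeff_nonneg _ (show (0:ℤ) ≤ n - f.order by omega),
      show (n - (f.order - 1)).toNat = (n - f.order).toNat + 1 by omega]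
    unfold psDeriv
    rw [PowerSeries.coeff_mk, LaurentSeries.powerSeriesPart_coeff,
      show f.order + (((n - f.order).toNat + 1 : ℕ) : ℤ) = n + 1 by omega]
    have h2 : (((n - f.order).toNat : ℂ)) = ((n : ℂ) - (f.order : ℂ)) := by
      have h3 : (((n - f.order).toNat : ℤ)) = n - f.order := by omega
      calc (((n - f.order).toNat : ℂ)) = (((n - f.order).toNat : ℤ) : ℂ) := by push_cast; ring
        _ = ((n - f.order : ℤ) : ℂ) := by rw [h3]
        _ = (n : ℂ) - (f.order : ℂ) := by push_cast; ring
    rw [h2]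
    push_cast
    ring

def eulerOp (f : LaurentSeries ℂ) : LaurentSeries ℂ :=
  ⟨fun n => (n : ℂ) * f.coeff n, f.isPWO_support'.mono (by
    intro n hn
    simp only [Function.mem_support, ne_eq] at hn ⊢
    intro h
    exact hn (by rw [h, mul_zero]))⟩

lemma eulerOp_coeff (f : LaurentSeries ℂ) (n : ℤ) :
    (eulerOp f).coeff n = (n : ℂ) * f.coeff n := rfl

lemma eulerOp_support (f : LaurentSeries ℂ) : (eulerOp f).support ⊆ f.support := by
  intro n hn
  simp only [HahnSeries.mem_support, eulerOp_coeff, ne_eq] at hn ⊢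
  intro h
  exact hn (by rw [h, mul_zero])

lemma eulerOp_mul (f g : LaurentSeries ℂ) :
    eulerOp (f * g) = eulerOp f * g + f * eulerOp g := by
  ext n
  rw [HahnSeries.coeff_add, eulerOp_coeff,
    HahnSeries.coeff_mul_left' f.isPWO_support (eulerOp_support f),
    HahnSeries.coeff_mul_right' g.isPWO_support (eulerOp_support g),
    HahnSeries.coeff_mul, ← Finset.sum_add_distrib, Finset.mul_sum]
  apply Finset.sum_congr rfl
  intro ij hij
  rw [Finset.mem_addAntidiagonal] at hij
  rw [eulerOp_coeff, eulerOp_coeff, ← hij.2.2]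
  push_cast
  ring

lemma lsDeriv_eq (f : LaurentSeries ℂ) :
    lsDeriv f = HahnSeries.single (-1 : ℤ) (1 : ℂ) * eulerOp f := by
  ext n
  rw [lsDeriv_coeff, single_mul_coeff, one_mul, sub_neg_eq_add, eulerOp_coeff]

lemma lsDeriv_mul (f g : LaurentSeries ℂ) :
    lsDeriv (f * g) = lsDeriv f * g + f * lsDeriv g := by
  rw [lsDeriv_eq, lsDeriv_eq, lsDeriv_eq, eulerOp_mul, mul_add]
  ring

lemma lsDeriv_add (f g : LaurentSeries ℂ) :
    lsDeriv (f + g) = lsDeriv f + lsDeriv g := by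
  ext n
  rw [HahnSeries.coeff_add, lsDeriv_coeff, lsDeriv_coeff, lsDeriv_coeff, HahnSeries.coeff_add]
  ring

lemma lsDeriv_smul (c : ℂ) (f : LaurentSeries ℂ) :
    lsDeriv (c • f) = c • lsDeriv f := by
  ext n
  rw [HahnSeries.coeff_smul, lsDeriv_coeff, lsDeriv_coeff, HahnSeries.coeff_smul]
  simp only [smul_eq_mul]
  ring

lemma lsDeriv_one : lsDeriv (1 : LaurentSeries ℂ) = 0 := by
  ext n
  rw [lsDeriv_coeff, HahnSeries.coeff_zero]
  rcases eq_or_ne n (-1) with h | h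
  · subst h; norm_num
  · rw [HahnSeries.coeff_one, if_neg (by omega)]
    ring

lemma lsDeriv_sub (f g : LaurentSeries ℂ) :
    lsDeriv (f - g) = lsDeriv f - lsDeriv g := by
  ext n
  rw [HahnSeries.coeff_sub, lsDeriv_coeff, lsDeriv_coeff, lsDeriv_coeff, HahnSeries.coeff_sub]
  ring

lemma lsDeriv_expNegU : lsDeriv expNegU = -expNegU := by
  ext n
  rw [lsDeriv_coeff, HahnSeries.coeff_neg]
  unfold expNegU
  rcases lt_trichotomy n (-1) with h | h | h
  · rw [ofPS_coeff_neg _ (show n + 1 < 0 by omega), ofPS_coeff_neg _ (show n < 0 by omega)]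
    ring
  · subst h
    rw [ofPS_coeff_neg _ (show (-1:ℤ) < 0 by norm_num)]
    norm_num
  · obtain ⟨k, rfl⟩ : ∃ k : ℕ, n = (k:ℤ) := ⟨n.toNat, by omega⟩
    rw [ofPS_coeff_nonneg _ (show (0:ℤ) ≤ (k:ℤ) + 1 by omega),
      ofPS_coeff_nonneg _ (show (0:ℤ) ≤ (k:ℤ) by omega),
      PowerSeries.coeff_rescale, PowerSeries.coeff_rescale, PowerSeries.coeff_exp,
      PowerSeries.coeff_exp, show ((k:ℤ)+1).toNat = k + 1 by omega,
      show ((k:ℤ)).toNat = k by omega]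
    have hf : ((k.factorial : ℂ)) ≠ 0 := by exact_mod_cast k.factorial_ne_zero
    have hf2 : ((k : ℂ) + 1) ≠ 0 := by exact_mod_cast (Nat.succ_ne_zero k)
    push_cast [map_div₀, Nat.factorial_succ]
    field_simp
    ring
lemma expNegU_coeff_one : expNegU.coeff 1 = -1 := by
  unfold expNegU
  rw [ofPS_coeff_nonneg _ (show (0:ℤ) ≤ 1 by norm_num),
    PowerSeries.coeff_rescale, PowerSeries.coeff_exp]
  norm_num

lemma wne : (1 - expNegU : LaurentSeries ℂ) ≠ 0 := by
  intro h
  have := congrArg (fun x : LaurentSeries ℂ => x.coeff 1) h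
  simp only [HahnSeries.coeff_sub, expNegU_coeff_one, HahnSeries.coeff_zero] at this
  rw [HahnSeries.coeff_one, if_neg (by norm_num)] at this
  norm_num at this

lemma lsDeriv_algebraMap (c : ℂ) : lsDeriv (algebraMap ℂ (LaurentSeries ℂ) c) = 0 := by
  ext n
  rw [lsDeriv_coeff, HahnSeries.coeff_zero]
  rcases eq_or_ne n (-1) with h | h
  · subst h; norm_num
  · rw [HahnSeries.algebraMap_apply']
    rcases lt_or_ge (n+1) 0 with hn | hn
    · rw [ofPS_coeff_neg _ hn]; ring
    · rw [ofPS_coeff_nonneg _ hn, PowerSeries.algebraMap_apply, PowerSeries.coeff_C,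
        if_neg (by omega)]
      ring

lemma lsDeriv_W : lsDeriv (1 - expNegU) = expNegU := by
  rw [lsDeriv_sub, lsDeriv_one, lsDeriv_expNegU]
  ring

lemma lsDeriv_Winv : lsDeriv ((1 - expNegU)⁻¹) = -(expNegU * ((1 - expNegU)⁻¹)^2) := by
  have h : (1 - expNegU) * (1 - expNegU)⁻¹ = 1 := mul_inv_cancel₀ wne
  have h2 := congrArg lsDeriv h
  rw [lsDeriv_mul, lsDeriv_one, lsDeriv_W] at h2
  have h3 : (1-expNegU)⁻¹ * (expNegU * (1-expNegU)⁻¹ + (1-expNegU) * lsDeriv (1-expNegU)⁻¹)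
      = 0 := by rw [h2, mul_zero]
  rw [mul_add, ← mul_assoc, ← mul_assoc, inv_mul_cancel₀ wne, one_mul] at h3
  linear_combination h3

lemma lsDeriv_Winv_pow (r : ℕ) :
    lsDeriv (((1 - expNegU)⁻¹)^r) =
      algebraMap ℂ (LaurentSeries ℂ) (-(r:ℂ)) * expNegU * ((1 - expNegU)⁻¹)^(r+1) := by
  induction r with
  | zero => simp [lsDeriv_one]
  | succ r ih =>
    rw [pow_succ, lsDeriv_mul, ih, lsDeriv_Winv]
    push_cast
    ring

lemma algebraMap_eq_single (c : ℂ) :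
    algebraMap ℂ (LaurentSeries ℂ) c = HahnSeries.single (0:ℤ) c := by
  ext m
  rw [HahnSeries.algebraMap_apply', HahnSeries.coeff_single]
  rcases lt_or_ge m 0 with hm | hm
  · rw [ofPS_coeff_neg _ hm, if_neg (by omega)]
  · rw [ofPS_coeff_nonneg _ hm, PowerSeries.algebraMap_apply, PowerSeries.coeff_C]
    by_cases h : m = 0
    · simp [h]
    · rw [if_neg (by omega), if_neg h]

lemma smul_eq (c : ℂ) (x : LaurentSeries ℂ) :
    c • x = algebraMap ℂ (LaurentSeries ℂ) c * x := by
  ext n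
  rw [HahnSeries.coeff_smul, algebraMap_eq_single, single_mul_coeff, sub_zero, smul_eq_mul]

def memS (x : LaurentSeries ℂ) : Prop :=
  ∃ (p : Polynomial ℂ) (r : ℕ), x = Polynomial.aeval expNegU p * ((1 - expNegU)⁻¹)^r

lemma haeval : Polynomial.aeval expNegU (1 - Polynomial.X : Polynomial ℂ) = 1 - expNegU := by
  simp

lemma hWpow (m : ℕ) : (1-expNegU)^m * ((1-expNegU)⁻¹)^m = 1 := by
  rw [← mul_pow, mul_inv_cancel₀ wne, one_pow]

lemma memS_mul {x y : LaurentSeries ℂ} (hx : memS x) (hy : memS y) : memS (x * y) := by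
  obtain ⟨p1, r1, rfl⟩ := hx
  obtain ⟨p2, r2, rfl⟩ := hy
  exact ⟨p1 * p2, r1 + r2, by rw [map_mul, pow_add]; ring⟩

lemma memS_add {x y : LaurentSeries ℂ} (hx : memS x) (hy : memS y) : memS (x + y) := by
  obtain ⟨p1, r1, rfl⟩ := hx
  obtain ⟨p2, r2, rfl⟩ := hy
  refine ⟨p1 * (1 - Polynomial.X)^r2 + p2 * (1 - Polynomial.X)^r1, r1 + r2, ?_⟩
  rw [map_add, map_mul, map_mul, map_pow, map_pow, haeval]
  have h := hWpow
  linear_combination (-(Polynomial.aeval expNegU p1 * ((1-expNegU)⁻¹)^r1)) * (h r2)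
    + (-(Polynomial.aeval expNegU p2 * ((1-expNegU)⁻¹)^r2)) * (h r1)

lemma memS_smul (c : ℂ) {x : LaurentSeries ℂ} (hx : memS x) : memS (c • x) := by
  obtain ⟨p, r, rfl⟩ := hx
  exact ⟨Polynomial.C c * p, r, by rw [smul_eq, map_mul, Polynomial.aeval_C]; ring⟩

lemma memS_zero : memS (0 : LaurentSeries ℂ) := ⟨0, 0, by simp⟩

lemma memS_sum {s : Finset ℕ} {f : ℕ → LaurentSeries ℂ} (h : ∀ i ∈ s, memS (f i)) :
    memS (∑ i ∈ s, f i) :=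
  Finset.sum_induction f memS (fun _ _ => memS_add) memS_zero h

lemma memS_sum' {α : Type*} {s : Finset α} {f : α → LaurentSeries ℂ} (h : ∀ i ∈ s, memS (f i)) :
    memS (∑ i ∈ s, f i) :=
  Finset.sum_induction f memS (fun _ _ => memS_add) memS_zero h

lemma lsDeriv_aeval (p : Polynomial ℂ) :
    ∃ q : Polynomial ℂ, lsDeriv (Polynomial.aeval expNegU p) = Polynomial.aeval expNegU q := by
  induction p using Polynomial.induction_on with
  | C a => exact ⟨0, by rw [Polynomial.aeval_C, lsDeriv_algebraMap]; simp⟩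
  | add p q hp hq =>
      obtain ⟨q1, h1⟩ := hp
      obtain ⟨q2, h2⟩ := hq
      exact ⟨q1 + q2, by rw [map_add, lsDeriv_add, h1, h2, map_add]⟩
  | monomial n a ih =>
      obtain ⟨q, hq⟩ := ih
      refine ⟨q * Polynomial.X - Polynomial.C a * Polynomial.X^(n+1), ?_⟩
      have h1 : (Polynomial.aeval expNegU) (Polynomial.C a * Polynomial.X ^ (n + 1)) =
          (Polynomial.aeval expNegU) (Polynomial.C a * Polynomial.X ^ n) * expNegU := by
        rw [map_mul, map_mul, map_pow, map_pow, Polynomial.aeval_X, pow_succ]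
        ring
      rw [h1, lsDeriv_mul, hq, lsDeriv_expNegU]
      simp only [map_sub, map_mul, map_pow, Polynomial.aeval_X, Polynomial.aeval_C]
      ring

lemma memS_lsDeriv {x : LaurentSeries ℂ} (hx : memS x) : memS (lsDeriv x) := by
  obtain ⟨p, r, rfl⟩ := hx
  rw [lsDeriv_mul, lsDeriv_Winv_pow]
  obtain ⟨q, hq⟩ := lsDeriv_aeval p
  rw [hq]
  apply memS_add ⟨q, r, rfl⟩
  refine ⟨p * Polynomial.C (-(r:ℂ)) * Polynomial.X, r + 1, ?_⟩
  rw [map_mul, map_mul, Polynomial.aeval_C, Polynomial.aeval_X]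
  ring

lemma memS_iterate (m : ℕ) {x : LaurentSeries ℂ} (hx : memS x) : memS (lsDeriv^[m] x) := by
  induction m with
  | zero => exact hx
  | succ m ih => rw [Function.iterate_succ_apply']; exact memS_lsDeriv ih

lemma memS_Winv_pow (r : ℕ) : memS (((1 - expNegU)⁻¹)^r) := ⟨1, r, by simp⟩

lemma memS_Wsq : memS ((1 - expNegU)^2) :=
  ⟨(1 - Polynomial.X)^2, 0, by rw [map_pow, haeval]; simp⟩

lemma memS_sub {x y : LaurentSeries ℂ} (hx : memS x) (hy : memS y) : memS (x - y) := by
  have : x - y = x + (-1 : ℂ) • y := by rw [smul_eq]; simp; ring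
  rw [this]
  exact memS_add hx (memS_smul _ hy)

lemma memS_Winv : memS ((1 - expNegU)⁻¹) := ⟨1, 1, by simp⟩

lemma memS_shiftInv (a : ℂ) (l : ℕ) :
    memS (PowerSeries.coeff l (shiftInv a)) := by
  unfold shiftInv
  rw [PowerSeries.coeff_mk]
  exact memS_smul _ (memS_iterate _ memS_Winv)

lemma memS_coeff_mul (φ ψ : PowerSeries (LaurentSeries ℂ))
    (h1 : ∀ n, memS (PowerSeries.coeff n φ))
    (h2 : ∀ n, memS (PowerSeries.coeff n ψ)) (n : ℕ) :
    memS (PowerSeries.coeff n (φ * ψ)) := by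
  rw [PowerSeries.coeff_mul]
  exact memS_sum' fun p _ => memS_mul (h1 _) (h2 _)

/-- the unique solution `g(u,h) ∈ ℂ((u))[[h]]` of
`g(u,h) g(u+κh,h) = 1/((1-e^{-u-h})(1-e^{-u+h})(1-e^{-u-κh})(1-e^{-u+κh}))`
with `g(u,0) = (1-e^{-u})⁻²` admits the form
`g(u,h) = ∑_{l ≥ 0} p_l(e^{-u})/(1-e^{-u})^{r_l} h^l`
for some polynomials `p_l ∈ ℂ[z]` and nonnegative integers `r_l`. -/
theorem stmt4 (κ : ℂ) (hκ : κ ≠ 0) (g : PowerSeries (LaurentSeries ℂ))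
    (hg0 : PowerSeries.coeff 0 g = ((1 - expNegU)⁻¹) ^ 2)
    (hg : g * taylorShift κ g = shiftInv 1 * shiftInv (-1) * shiftInv κ * shiftInv (-κ)) :
    ∃ (p : ℕ → Polynomial ℂ) (r : ℕ → ℕ), ∀ l : ℕ,
      PowerSeries.coeff l g =
        Polynomial.aeval expNegU (p l) * ((1 - expNegU)⁻¹) ^ (r l) := by
  have key : ∀ l : ℕ, memS (PowerSeries.coeff l g) := by
    intro l
    induction l using Nat.strong_induction_on with
    | _ l IH =>
    rcases Nat.eq_zero_or_pos l with rfl | hl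
    · rw [hg0]; exact memS_Winv_pow 2
    · have hs : ∀ (a : ℂ) (n : ℕ), memS (PowerSeries.coeff n (shiftInv a)) :=
        memS_shiftInv
      have hR : memS (PowerSeries.coeff l
          (shiftInv 1 * shiftInv (-1) * shiftInv κ * shiftInv (-κ))) :=
        memS_coeff_mul _ _ (memS_coeff_mul _ _ (memS_coeff_mul _ _ (hs 1) (hs (-1))) (hs κ))
          (hs (-κ)) l
      have hT : ∀ j : ℕ, j < l → memS (PowerSeries.coeff j (taylorShift κ g)) := by
        intro j hj
        unfold taylorShift
        rw [PowerSeries.coeff_mk]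
        exact memS_sum fun m _ =>
          memS_smul _ (memS_iterate _ (IH _ (lt_of_le_of_lt (Nat.sub_le j m) hj)))
      have hco := congrArg (PowerSeries.coeff l) hg
      rw [PowerSeries.coeff_mul] at hco
      have h1 : ((l, 0) : ℕ × ℕ) ∈ Finset.HasAntidiagonal.antidiagonal l := by simp
      have h2 : ((0, l) : ℕ × ℕ) ∈ (Finset.HasAntidiagonal.antidiagonal l).erase (l, 0) := by
        rw [Finset.mem_erase]
        constructor
        · intro hc
          rw [Prod.ext_iff] at hc
          omega
        · simp
      rw [← Finset.sum_erase_add _ _ h1, ← Finset.sum_erase_add _ _ h2] at hco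
      have hT0 : PowerSeries.coeff 0 (taylorShift κ g) =
          PowerSeries.coeff 0 g := by
        unfold taylorShift
        rw [PowerSeries.coeff_mk]
        simp
      have hTl : PowerSeries.coeff l (taylorShift κ g) =
          (∑ m ∈ Finset.range l, (κ ^ (m+1) / ((m+1).factorial : ℂ)) •
            lsDeriv^[m+1] (PowerSeries.coeff (l - (m+1)) g)) +
          PowerSeries.coeff l g := by
        unfold taylorShift
        rw [PowerSeries.coeff_mk, Finset.sum_range_succ']
        simp
      rw [hT0, hTl] at hco
      set R := PowerSeries.coeff l
          (shiftInv 1 * shiftInv (-1) * shiftInv κ * shiftInv (-κ)) with hRdef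
      set B1 := ∑ m ∈ Finset.range l, (κ ^ (m+1) / ((m+1).factorial : ℂ)) •
          lsDeriv^[m+1] (PowerSeries.coeff (l - (m+1)) g) with hB1def
      set Srest := ∑ p ∈ ((Finset.HasAntidiagonal.antidiagonal l).erase (l, 0)).erase (0, l),
          PowerSeries.coeff p.1 g *
            PowerSeries.coeff p.2 (taylorShift κ g) with hSdef
      have hB1 : memS B1 := by
        rw [hB1def]
        exact memS_sum fun m _ =>
          memS_smul _ (memS_iterate _ (IH _ (Nat.sub_lt hl (Nat.succ_pos m))))
      have hSrest : memS Srest := by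
        rw [hSdef]
        refine memS_sum' fun p hp => ?_
        rw [Finset.mem_erase, Finset.mem_erase, Finset.HasAntidiagonal.mem_antidiagonal] at hp
        obtain ⟨hp1, hp2, hp3⟩ := hp
        have hlt1 : p.1 < l := by
          rcases Nat.lt_or_ge p.1 l with h | h
          · exact h
          · exfalso; apply hp2; rw [Prod.ext_iff]; omega
        have hlt2 : p.2 < l := by
          rcases Nat.lt_or_ge p.2 l with h | h
          · exact h
          · exfalso; apply hp1; rw [Prod.ext_iff]; omega
        exact memS_mul (IH _ hlt1) (hT _ hlt2)
      have hW2 : (1 - expNegU)^2 * PowerSeries.coeff 0 g = 1 := by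
        rw [hg0, ← mul_pow, mul_inv_cancel₀ wne, one_pow]
      have h2c : algebraMap ℂ (LaurentSeries ℂ) (2:ℂ)⁻¹ * (2 : LaurentSeries ℂ) = 1 := by
        rw [← map_ofNat (algebraMap ℂ (LaurentSeries ℂ)) 2, ← map_mul]
        norm_num
      have hrepr : PowerSeries.coeff l g =
          (2:ℂ)⁻¹ • ((1 - expNegU)^2 * (R - Srest -
            PowerSeries.coeff 0 g * B1)) := by
        rw [smul_eq]
        linear_combination (algebraMap ℂ (LaurentSeries ℂ) (2:ℂ)⁻¹ * (1 - expNegU)^2) * hco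
          - (2 * algebraMap ℂ (LaurentSeries ℂ) (2:ℂ)⁻¹ *
              PowerSeries.coeff l g) * hW2
          - (PowerSeries.coeff l g) * h2c
      rw [hrepr]
      exact memS_smul _ (memS_mul memS_Wsq
        (memS_sub (memS_sub hR hSrest) (memS_mul (IH 0 hl) hB1)))
  choose p r hpr using key
  exact ⟨p, r, hpr⟩

end
end
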